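/- A state-finite retractable automaton A contains a kernel (a subautomaton contained in every subautomaton of A) if and only if the set of principal subautomata of A forms a tree under inclusion, i.e., it is a meet-semilattice in which every two elements have a lower bound and every subset with an upper bound has a greatest element. -/

import Mathlib

universe u v

/-- The transition function extended to words (`X*`). -/
def deltaStar {A X : Type*} (δ : A → X → A) : A → List X → A
  | a, [] => a
  | a, x :: p => deltaStar δ (δ a x) p

/-- `B` is a subautomaton of the automaton with transition `δ`. -/
def IsSubaut {A X : Type*} (δ : A → X → A) (B : Set A) : Prop :=
  B.Nonempty ∧ ∀ b ∈ B, ∀ x : X, δ b x ∈ B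

/-- `φ` is a retract homomorphism of the automaton onto the subautomaton `B`:
a homomorphism of `A` onto `B` leaving the elements of `B` fixed. -/
def IsRetractHom {A X : Type*} (δ : A → X → A) (B : Set A) (φ : A → A) : Prop :=
  (∀ a, φ a ∈ B) ∧ (∀ b ∈ B, φ b = b) ∧ ∀ a x, φ (δ a x) = δ (φ a) x

/-- `B` is a retract subautomaton. -/
def IsRetract {A X : Type*} (δ : A → X → A) (B : Set A) : Prop :=
  ∃ φ, IsRetractHom δ B φ

/-- An automaton is retractable if every subautomaton is retract. -/
def Retractable {A X : Type*} (δ : A → X → A) : Prop :=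
  ∀ B, IsSubaut δ B → IsRetract δ B

/-- Retractability of the subautomaton on the carrier `D` (homomorphisms are
represented by functions on the ambient state set, restricted to `D`). -/
def RetractableOn {A X : Type*} (δ : A → X → A) (D : Set A) : Prop :=
  ∀ C ⊆ D, IsSubaut δ C →
    ∃ φ : A → A, (∀ a ∈ D, φ a ∈ C) ∧ (∀ c ∈ C, φ c = c) ∧
      ∀ a ∈ D, ∀ x, φ (δ a x) = δ (φ a) x

/-- The principal subautomaton `R(a) = δ(a, X*)` generated by `a`. -/
def Rset {A X : Type*} (δ : A → X → A) (a : A) : Set A :=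
  {b | ∃ p : List X, deltaStar δ a p = b}

/-- The `R`-class `R_a = {b : R(b) = R(a)}`. -/
def Rclass {A X : Type*} (δ : A → X → A) (a : A) : Set A :=
  {b | Rset δ b = Rset δ a}

/-- `R[a] = R(a) − R_a`. -/
def Rideal {A X : Type*} (δ : A → X → A) (a : A) : Set A :=
  Rset δ a \ Rclass δ a

/-- The Rees congruence induced by `B`: two states are related iff they are
equal or both lie in `B`. -/
def reesRel {A : Type*} (B : Set A) (u v : A) : Prop :=
  u = v ∨ (u ∈ B ∧ v ∈ B)

/-- A minimal subautomaton: a subautomaton with no proper subautomaton. -/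
def IsMinimalSubaut {A X : Type*} (δ : A → X → A) (B : Set A) : Prop :=
  IsSubaut δ B ∧ ∀ C ⊆ B, IsSubaut δ C → C = B

/-- The automaton has a kernel: a subautomaton contained in every subautomaton. -/
def HasKernel {A X : Type*} (δ : A → X → A) : Prop :=
  ∃ K, IsSubaut δ K ∧ ∀ B, IsSubaut δ B → K ⊆ B

/-- The principal factor `R{a}` (the Rees factor of `R(a)` modulo `R[a]`,
described via the Rees congruence) is strongly connected. -/
def FactorSC {A X : Type*} (δ : A → X → A) (a : A) : Prop :=
  ∀ b ∈ Rset δ a, ∀ c ∈ Rset δ a,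
    ∃ p : List X, p ≠ [] ∧ reesRel (Rideal δ a) (deltaStar δ b p) c

/-- The principal factor `R{a}` is a strongly trap-connected non-trivial
one-trap automaton (with trap the class of `t`). -/
def FactorSTC {A X : Type*} (δ : A → X → A) (a : A) : Prop :=
  ∃ t ∈ Rset δ a,
    (∀ x, reesRel (Rideal δ a) (δ t x) t) ∧
    (∃ b ∈ Rset δ a, ¬ reesRel (Rideal δ a) b t) ∧
    (∀ b ∈ Rset δ a, (∀ x, reesRel (Rideal δ a) (δ b x) b) → reesRel (Rideal δ a) b t) ∧
    (∀ b ∈ Rset δ a, ∀ c ∈ Rset δ a, ¬ reesRel (Rideal δ a) b t →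
      ∃ p : List X, p ≠ [] ∧ reesRel (Rideal δ a) (deltaStar δ b p) c)

/-- The principal factor `R{a}` is a strongly trapped non-trivial one-trap
automaton (with trap the class of `t`). -/
def FactorST {A X : Type*} (δ : A → X → A) (a : A) : Prop :=
  ∃ t ∈ Rset δ a,
    (∃ b ∈ Rset δ a, ¬ reesRel (Rideal δ a) b t) ∧
    (∀ b ∈ Rset δ a, (∀ x, reesRel (Rideal δ a) (δ b x) b) → reesRel (Rideal δ a) b t) ∧
    (∀ b ∈ Rset δ a, ∀ x, reesRel (Rideal δ a) (δ b x) t)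

/-- Semiconnected: every principal factor is strongly connected or strongly
trap-connected. -/
def Semiconnected {A X : Type*} (δ : A → X → A) : Prop :=
  ∀ a, FactorSC δ a ∨ FactorSTC δ a

/-- The subautomaton on `D` is semiconnected, via the characterization: for
every subautomaton `C ⊆ D` and every `a ∈ C` there are `b ∈ C` and a nonempty
word `p` with `a = δ(b,p)`. -/
def SemiconnectedOn {A X : Type*} (δ : A → X → A) (D : Set A) : Prop :=
  ∀ C ⊆ D, IsSubaut δ C → ∀ a ∈ C, ∃ b ∈ C, ∃ p : List X, p ≠ [] ∧ deltaStar δ b p = a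

/-- The automaton is a dilation of its subautomaton `B`. -/
def IsDilationOf {A X : Type*} (δ : A → X → A) (B : Set A) : Prop :=
  IsSubaut δ B ∧ ∃ φ : A → A, (∀ a, φ a ∈ B) ∧ (∀ b ∈ B, φ b = b) ∧
    ∀ a x, δ a x = δ (φ a) x

/-- Extension of a partial transition function (`none` = the removed trap)
to words. -/
def pStar {C X : Type*} (d : C → X → Option C) : C → List X → Option C
  | a, [] => some a
  | a, x :: p => (d a x).bind fun b => pStar d b p

/-- The data of the Construction: a finite tree `(T, le)` with least element
`i0`; `C i` is the trap-removed part `A⁰ᵢ` of the automaton `Aᵢ`, with partial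
transition `d i` (`none` means the trap); `A_{i0}` is strongly connected and
the other `Aᵢ` are non-trivial strongly trap-connected one-trap automata;
`Φ i j` are the composite partial homomorphisms along covering chains
(given here as coherent data whose covering components satisfy conditions
(ii) and (iii)); `δ'` is the glued transition function on `A = ⋃ A⁰ᵢ`. -/
def ConstructionSpec {X : Type*} (T : Type*) (le : T → T → Prop) (i0 : T)
    (C : T → Type*) (d : ∀ i, C i → X → Option (C i))
    (Φ : ∀ i j, le j i → C i → C j)
    (δ' : (Σ i, C i) → X → Σ i, C i) : Prop :=
  (∀ i, le i i) ∧ (∀ i j, le i j → le j i → i = j) ∧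
  (∀ i j k, le i j → le j k → le i k) ∧
  Finite T ∧
  (∀ S : Set T, S.Nonempty → (∃ u, ∀ i ∈ S, le i u) → ∃ g ∈ S, ∀ i ∈ S, le i g) ∧
  (∀ i, le i0 i) ∧
  Nonempty (C i0) ∧
  (∀ (a : C i0) (x : X), (d i0 a x).isSome) ∧
  (∀ a b : C i0, ∃ p : List X, p ≠ [] ∧ pStar (d i0) a p = some b) ∧
  (∀ i, i ≠ i0 → Nonempty (C i) ∧
    (∀ a b : C i, ∃ p : List X, p ≠ [] ∧ pStar (d i) a p = some b) ∧
    (∀ a : C i, ∃ p : List X, p ≠ [] ∧ pStar (d i) a p = none)) ∧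
  (∀ i (h : le i i) (a : C i), Φ i i h a = a) ∧
  (∀ i j k (h1 : le j i) (h2 : le k j) (h3 : le k i) (a : C i),
    Φ j k h2 (Φ i j h1 a) = Φ i k h3 a) ∧
  (∀ i j (h : le j i), i ≠ j → (∀ k, le j k → le k i → k = j ∨ k = i) →
    (∀ (a : C i) (x : X) (b : C i),
      d i a x = some b → d j (Φ i j h a) x = some (Φ i j h b)) ∧
    ∃ (a : C i) (x : X), d i a x = none ∧ (d j (Φ i j h a) x).isSome) ∧
  (∀ i (a : C i) (x : X), ∃ (j : T) (hj : le j i) (b : C j),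
    δ' ⟨i, a⟩ x = ⟨j, b⟩ ∧ d j (Φ i j hj a) x = some b ∧
    ∀ k (hk : le k i), (d k (Φ i k hk a) x).isSome → le k j)


theorem deltaStar_append {A X : Type*} (δ : A → X → A) (a : A) (p q : List X) :
    deltaStar δ a (p ++ q) = deltaStar δ (deltaStar δ a p) q := by
  induction p generalizing a with
  | nil => rfl
  | cons x p ih => simp [deltaStar, ih]

theorem mem_Rset_self {A X : Type*} (δ : A → X → A) (a : A) : a ∈ Rset δ a := ⟨[], rfl⟩

theorem Rset_trans {A X : Type*} (δ : A → X → A) {a b : A} (h : b ∈ Rset δ a) :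
    Rset δ b ⊆ Rset δ a := by
  obtain ⟨p, hp⟩ := h
  rintro c ⟨q, hq⟩
  exact ⟨p ++ q, by rw [deltaStar_append, hp, hq]⟩

theorem Rset_subaut {A X : Type*} (δ : A → X → A) (a : A) : IsSubaut δ (Rset δ a) := by
  refine ⟨⟨a, mem_Rset_self δ a⟩, ?_⟩
  rintro b ⟨p, hp⟩ x
  exact ⟨p ++ [x], by rw [deltaStar_append, hp]; rfl⟩

theorem deltaStar_mem {A X : Type*} {δ : A → X → A} {B : Set A}
    (hB : ∀ b ∈ B, ∀ x, δ b x ∈ B) {k : A} (hk : k ∈ B) (p : List X) :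
    deltaStar δ k p ∈ B := by
  induction p generalizing k with
  | nil => exact hk
  | cons x p ih => exact ih (hB k hk x)

theorem Rset_subset_of_mem {A X : Type*} {δ : A → X → A} {B : Set A}
    (hB : IsSubaut δ B) {k : A} (hk : k ∈ B) : Rset δ k ⊆ B := by
  rintro c ⟨p, hp⟩
  exact hp ▸ deltaStar_mem hB.2 hk p

theorem hom_deltaStar {A X : Type*} {δ : A → X → A} {φ : A → A}
    (hφ : ∀ a x, φ (δ a x) = δ (φ a) x) (a : A) (p : List X) :
    φ (deltaStar δ a p) = deltaStar δ (φ a) p := by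
  induction p generalizing a with
  | nil => rfl
  | cons x p ih => simp [deltaStar, ih, hφ]

theorem comparable_of_retractable {A X : Type*} {δ : A → X → A} (h : Retractable δ)
    {u a b : A} (ha : a ∈ Rset δ u) (hb : b ∈ Rset δ u) :
    Rset δ a ⊆ Rset δ b ∨ Rset δ b ⊆ Rset δ a := by
  obtain ⟨φ, hφ1, hφ2, hφ3⟩ := h (Rset δ a ∪ Rset δ b)
    ⟨⟨a, Or.inl (mem_Rset_self δ a)⟩, by
      rintro c (hc | hc) x
      · exact Or.inl ((Rset_subaut δ a).2 c hc x)
      · exact Or.inr ((Rset_subaut δ b).2 c hc x)⟩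
  obtain ⟨s, hs⟩ := ha
  obtain ⟨t, ht⟩ := hb
  rcases hφ1 u with hu | hu
  · right
    refine Rset_trans δ (a := a) ?_
    have hfix := hφ2 b (Or.inr (mem_Rset_self δ b))
    rw [← hfix, ← ht, hom_deltaStar hφ3]
    exact Rset_trans δ hu ⟨t, rfl⟩
  · left
    refine Rset_trans δ (a := b) ?_
    have hfix := hφ2 a (Or.inl (mem_Rset_self δ a))
    rw [← hfix, ← hs, hom_deltaStar hφ3]
    exact Rset_trans δ hu ⟨s, rfl⟩

/-- Corollary 2: a state-finite retractable automaton contains a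
kernel iff its principal subautomata form a tree under inclusion. -/
theorem stmt_3 {A X : Type*} [Finite A] [Nonempty A] [Nonempty X]
    (δ : A → X → A) (h : Retractable δ) :
    HasKernel δ ↔
      ((∀ a b : A, ∃ c : A, Rset δ c ⊆ Rset δ a ∧ Rset δ c ⊆ Rset δ b) ∧
       (∀ S : Set (Set A), S.Nonempty → (∀ R ∈ S, ∃ a : A, R = Rset δ a) →
         (∃ u : A, ∀ R ∈ S, R ⊆ Rset δ u) → ∃ g ∈ S, ∀ R ∈ S, R ⊆ g)) := by
  constructor
  · rintro ⟨K, hK, hmin⟩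
    obtain ⟨k, hk⟩ := hK.1
    constructor
    · intro a b
      exact ⟨k, (Rset_subset_of_mem hK hk).trans (hmin _ (Rset_subaut δ a)),
        (Rset_subset_of_mem hK hk).trans (hmin _ (Rset_subaut δ b))⟩
    · rintro S hSne hSprin ⟨u, hu⟩
      obtain ⟨g, hgS, hgmax⟩ :=
        Set.Finite.exists_maximalFor (id : Set A → Set A) S (Set.toFinite S) hSne
      refine ⟨g, hgS, fun R hR => ?_⟩
      obtain ⟨a, rfl⟩ := hSprin R hR
      obtain ⟨b, rfl⟩ := hSprin g hgS
      have hau : a ∈ Rset δ u := hu _ hR (mem_Rset_self δ a)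
      have hbu : b ∈ Rset δ u := hu _ hgS (mem_Rset_self δ b)
      rcases comparable_of_retractable h hau hbu with hc | hc
      · exact hc
      · exact hgmax hR hc
  · rintro ⟨h1, -⟩
    obtain ⟨k, -, hk⟩ := Set.Finite.exists_minimalFor (Rset δ) Set.univ
      Set.finite_univ ⟨Classical.arbitrary A, trivial⟩
    refine ⟨Rset δ k, Rset_subaut δ k, fun B hB => ?_⟩
    obtain ⟨b, hb⟩ := hB.1
    obtain ⟨c, hck, hcb⟩ := h1 k b
    have hkc : Rset δ k = Rset δ c := le_antisymm (hk trivial hck) hck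
    exact (hkc ▸ hcb).trans (Rset_subset_of_mem hB hb)
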